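/- Let M be an n×n real symmetric matrix and let s be a positive integer with λ_s(M) > tr(M)/n. Let θ be the number of eigenvalues of M less than tr(M)/n. Then for every integer k with s ≤ k ≤ n, Σ_{i=1}^{k} λᵢ(M) ≤ (k/n)·tr(M) + √( tr((M − (tr(M)/n)·I)²) · (k − s²/(θ+s)) ). -/

import Mathlib

lemma aux_alg (A B p q x y z : ℝ) (hp : 0 < p) (hq : 0 ≤ q) (hx : 0 ≤ x) (hy : 0 ≤ y)
    (hz : 0 ≤ z) (hA : A^2 ≤ p*(x+z)) (hB : B^2 ≤ q*y) :
    (A+B)^2 ≤ (p+q)*(x+y+z) := by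
  rcases eq_or_lt_of_le hq with hq0 | hq0
  · have hB0 : B = 0 := by nlinarith [sq_nonneg B]
    subst hB0
    nlinarith [mul_nonneg hp.le hy]
  · have hpq : 0 < p * q := mul_pos hp hq0
    have h1 : q*(p+q)*A^2 ≤ q*(p+q)*(p*(x+z)) := by
      apply mul_le_mul_of_nonneg_left hA; positivity
    have h2 : p*(p+q)*B^2 ≤ p*(p+q)*(q*y) := by
      apply mul_le_mul_of_nonneg_left hB; positivity
    have key : p*q*((A+B)^2) ≤ p*q*((p+q)*(x+y+z)) := by
      nlinarith [sq_nonneg (q*A - p*B)]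
    exact le_of_mul_le_mul_left key hpq

lemma aux_card_Ico {n a b : ℕ} (hb : b ≤ n) :
    (Finset.univ.filter (fun i : Fin n => a ≤ (i : ℕ) ∧ (i : ℕ) < b)).card = b - a := by
  rw [Finset.card_filter]
  rw [Fin.sum_univ_eq_sum_range (fun j => if a ≤ j ∧ j < b then 1 else 0)]
  rw [← Finset.card_filter]
  rw [show (Finset.range n).filter (fun j => a ≤ j ∧ j < b) = Finset.Ico a b by
    ext j; simp [Finset.mem_filter, Finset.mem_range, Finset.mem_Ico]; omega]
  exact Nat.card_Ico a b

lemma aux_card {n a : ℕ} (ha : a ≤ n) :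
    (Finset.univ.filter (fun i : Fin n => (i : ℕ) < a)).card = a := by
  have := aux_card_Ico (n := n) (a := 0) (b := a) ha
  simpa using this

lemma aux_card_ge {n a : ℕ} (ha : a ≤ n) :
    (Finset.univ.filter (fun i : Fin n => a ≤ (i : ℕ))).card = n - a := by
  have h1 : (Finset.univ.filter (fun i : Fin n => a ≤ (i : ℕ)))
      = (Finset.univ.filter (fun i : Fin n => (i : ℕ) < a))ᶜ := by
    ext i; simp [not_lt]
  rw [h1, Finset.card_compl, aux_card ha, Fintype.card_fin]

open Matrix in
lemma aux_trace_sq {n : ℕ} (M : Matrix (Fin n) (Fin n) ℝ) (hM : M.IsHermitian) (μ : ℝ) :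
    Matrix.trace ((M - μ • (1 : Matrix (Fin n) (Fin n) ℝ)) ^ 2)
      = ∑ i, (hM.eigenvalues i - μ)^2 := by
  set U : Matrix (Fin n) (Fin n) ℝ := (hM.eigenvectorUnitary : Matrix (Fin n) (Fin n) ℝ) with hU
  set D : Matrix (Fin n) (Fin n) ℝ := Matrix.diagonal hM.eigenvalues - μ • 1 with hD
  have hUU : U * star U = 1 := (Matrix.mem_unitaryGroup_iff).mp hM.eigenvectorUnitary.2
  have hUU' : star U * U = 1 := (Matrix.mem_unitaryGroup_iff').mp hM.eigenvectorUnitary.2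
  have hspec : M = U * Matrix.diagonal hM.eigenvalues * star U := by
    have := hM.spectral_theorem
    simpa using this
  have hone : μ • (1 : Matrix (Fin n) (Fin n) ℝ) = U * (μ • 1) * star U := by
    rw [Matrix.mul_smul, Matrix.smul_mul, Matrix.mul_one, hUU]
  have hA : M - μ • 1 = U * D * star U := by
    rw [hD, Matrix.mul_sub, Matrix.sub_mul]
    rw [← hspec, ← hone]
  have hsq : (M - μ • 1)^2 = U * (D * D) * star U := by
    rw [hA, sq]
    calc U * D * star U * (U * D * star U)
        = U * (D * (star U * U * (D * star U))) := by simp only [Matrix.mul_assoc]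
      _ = U * (D * D) * star U := by rw [hUU', Matrix.one_mul]; simp only [Matrix.mul_assoc]
  rw [hsq, Matrix.trace_mul_cycle, ← Matrix.mul_assoc, hUU', Matrix.one_mul]
  have hdiag : D = Matrix.diagonal (fun i => hM.eigenvalues i - μ) := by
    rw [hD]
    ext i j
    by_cases h : i = j <;> simp [Matrix.diagonal_apply, Matrix.one_apply, h]
  rw [hdiag, Matrix.diagonal_mul_diagonal, Matrix.trace_diagonal]
  simp [sq]

open Matrix in
lemma aux_trace_eq {n : ℕ} (M : Matrix (Fin n) (Fin n) ℝ) (hM : M.IsHermitian) :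
    M.trace = ∑ i, hM.eigenvalues i := by
  set U : Matrix (Fin n) (Fin n) ℝ := (hM.eigenvectorUnitary : Matrix (Fin n) (Fin n) ℝ) with hU
  have hUU' : star U * U = 1 := (Matrix.mem_unitaryGroup_iff').mp hM.eigenvectorUnitary.2
  have hspec : M = U * Matrix.diagonal hM.eigenvalues * star U := by
    have := hM.spectral_theorem
    simpa using this
  rw [show M.trace = _ from congrArg Matrix.trace hspec, Matrix.trace_mul_cycle,
    hUU', Matrix.one_mul, Matrix.trace_diagonal]


set_option maxHeartbeats 1000000 in

/-- Upper bound for the sum of the `k` largest eigenvalues of a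
real symmetric matrix `M`, where `λ_s(M) > tr(M)/n` and `θ` is the number of
eigenvalues below `tr(M)/n`: for `s ≤ k ≤ n`,
`∑_{i=1}^k λᵢ(M) ≤ (k/n) tr(M) + √(tr((M − (tr(M)/n)I)²) (k − s²/(θ+s)))`. -/
theorem stmt5 {n : ℕ} (hn : 1 ≤ n) (M : Matrix (Fin n) (Fin n) ℝ)
    (hM : M.IsHermitian)
    (lam : Fin n → ℝ) (σ : Equiv.Perm (Fin n))
    (hlam : lam = hM.eigenvalues ∘ σ) (hdec : Antitone lam)
    (s : ℕ) (hs1 : 1 ≤ s) (hsn : s ≤ n)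
    (hse : M.trace / n < lam ⟨s - 1, by omega⟩)
    (θ : ℕ)
    (hθ : θ = (Finset.univ.filter (fun i => lam i < M.trace / n)).card)
    (k : ℕ) (hks : s ≤ k) (hkn : k ≤ n) :
    ∑ i ∈ Finset.univ.filter (fun i : Fin n => (i : ℕ) < k), lam i ≤
      ((k : ℝ) / n) * M.trace +
        Real.sqrt
          (Matrix.trace ((M - (M.trace / n) • (1 : Matrix (Fin n) (Fin n) ℝ)) ^ 2) *
            ((k : ℝ) - (s : ℝ) ^ 2 / ((θ : ℝ) + s))) := by
  have hn0 : (0:ℝ) < n := by exact_mod_cast hn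
  set μ : ℝ := M.trace / n with hμ
  set g : Fin n → ℝ := fun i => lam i - μ with hg
  set T : ℝ := Matrix.trace ((M - μ • (1 : Matrix (Fin n) (Fin n) ℝ)) ^ 2) with hTdef
  -- basic sums
  have hsum : ∑ i, lam i = M.trace := by
    rw [hlam, aux_trace_eq M hM]
    simp only [Function.comp_apply]
    exact Equiv.sum_comp σ hM.eigenvalues
  have hgsum : ∑ i, g i = 0 := by
    simp only [hg, Finset.sum_sub_distrib, Finset.sum_const, Finset.card_univ,
      Fintype.card_fin, nsmul_eq_mul, hsum, hμ]
    field_simp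
    ring
  have hT : T = ∑ i, (g i)^2 := by
    rw [hTdef, aux_trace_sq M hM μ]
    rw [show (∑ i, (g i)^2) = ∑ i, (hM.eigenvalues (σ i) - μ)^2 by
      apply Finset.sum_congr rfl; intro i _; rw [hg, hlam]; rfl]
    exact (Equiv.sum_comp σ (fun i => (hM.eigenvalues i - μ)^2)).symm
  have hgdec : Antitone g := fun i j h => sub_le_sub_right (hdec h) μ
  have hgs : 0 < g ⟨s-1, by omega⟩ := sub_pos.mpr hse
  have hθn : θ ≤ n := by
    rw [hθ]
    calc (Finset.univ.filter _).card ≤ (Finset.univ : Finset (Fin n)).card :=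
      Finset.card_filter_le _ _
    _ = n := by simp
  have hθcard : (Finset.univ.filter (fun i : Fin n => g i < 0)).card = θ := by
    rw [hθ]
    congr 1
    ext i
    simp [hg, sub_neg, hμ]
  set m : ℕ := n - θ with hm
  -- sign characterization
  have hF : ∀ i : Fin n, g i < 0 ↔ m ≤ (i:ℕ) := by
    intro i
    constructor
    · intro hi
      by_contra hmi
      push_neg at hmi
      have hsub : Finset.univ.filter (fun j : Fin n => (i:ℕ) ≤ (j:ℕ)) ⊆
          Finset.univ.filter (fun j : Fin n => g j < 0) := by
        intro j hj
        simp only [Finset.mem_filter, Finset.mem_univ, true_and] at hj ⊢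
        exact lt_of_le_of_lt (hgdec (Fin.le_def.mpr hj)) hi
      have hc := Finset.card_le_card hsub
      rw [aux_card_ge (le_of_lt i.isLt), hθcard] at hc
      have := i.isLt
      omega
    · intro hi
      by_contra hgi
      push_neg at hgi
      have hsub : Finset.univ.filter (fun j : Fin n => g j < 0) ⊆
          Finset.univ.filter (fun j : Fin n => (i:ℕ)+1 ≤ (j:ℕ)) := by
        intro j hj
        simp only [Finset.mem_filter, Finset.mem_univ, true_and] at hj ⊢
        by_contra hji
        push_neg at hji
        have : g i ≤ g j := hgdec (Fin.le_def.mpr (by omega))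
        linarith
      have hc := Finset.card_le_card hsub
      rw [aux_card_ge (by omega : (i:ℕ)+1 ≤ n), hθcard] at hc
      omega
  have hθ1 : 1 ≤ θ := by
    by_contra hθ0
    push_neg at hθ0
    interval_cases θ
    have hpos : ∀ i : Fin n, 0 ≤ g i := by
      intro i
      by_contra hneg
      push_neg at hneg
      have := (hF i).mp hneg
      have := i.isLt
      omega
    have : g ⟨s-1, by omega⟩ ≤ ∑ i, g i :=
      Finset.single_le_sum (fun i _ => hpos i) (Finset.mem_univ _)
    rw [hgsum] at this
    linarith
  have hsm : s ≤ m := by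
    have : ¬ (g ⟨s-1, by omega⟩ < 0) := by linarith
    have h2 : ¬ (m ≤ s-1) := fun h => this ((hF _).mpr h)
    omega
  set k' : ℕ := min k m with hk'
  have hk'k : k' ≤ k := min_le_left _ _
  have hk'm : k' ≤ m := min_le_right _ _
  have hsk' : s ≤ k' := le_min hks hsm
  have hk'n : k' ≤ n := le_trans hk'm (by omega)
  -- the finsets
  set P : Finset (Fin n) := Finset.univ.filter (fun i : Fin n => (i:ℕ) < s) with hP
  set Q : Finset (Fin n) := Finset.univ.filter (fun i : Fin n => s ≤ (i:ℕ) ∧ (i:ℕ) < k') with hQ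
  set R : Finset (Fin n) := Finset.univ.filter (fun i : Fin n => m ≤ (i:ℕ)) with hR
  set K : Finset (Fin n) := Finset.univ.filter (fun i : Fin n => (i:ℕ) < k) with hK
  set K' : Finset (Fin n) := Finset.univ.filter (fun i : Fin n => (i:ℕ) < k') with hK'
  set A : ℝ := ∑ i ∈ P, g i with hA
  set B : ℝ := ∑ i ∈ Q, g i with hB
  set N : ℝ := ∑ i ∈ R, g i with hN
  set x : ℝ := ∑ i ∈ P, (g i)^2 with hx
  set y : ℝ := ∑ i ∈ Q, (g i)^2 with hy
  set z : ℝ := ∑ i ∈ R, (g i)^2 with hz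
  have hx0 : 0 ≤ x := Finset.sum_nonneg fun i _ => sq_nonneg _
  have hy0 : 0 ≤ y := Finset.sum_nonneg fun i _ => sq_nonneg _
  have hz0 : 0 ≤ z := Finset.sum_nonneg fun i _ => sq_nonneg _
  have hdisjPQ : Disjoint P Q := by
    rw [Finset.disjoint_left]
    intro a haP haQ
    simp only [hP, hQ, Finset.mem_filter, Finset.mem_univ, true_and] at haP haQ
    omega
  have hPQ : P ∪ Q = K' := by
    ext i
    simp only [hP, hQ, hK', Finset.mem_union, Finset.mem_filter, Finset.mem_univ, true_and]
    omega
  have hK'AB : ∑ i ∈ K', g i = A + B := by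
    rw [← hPQ, Finset.sum_union hdisjPQ]
  have hKK' : ∑ i ∈ K, g i ≤ A + B := by
    rw [← hK'AB]
    have hsub : K' ⊆ K := by
      intro i hi
      simp only [hK, hK', Finset.mem_filter, Finset.mem_univ, true_and] at hi ⊢
      omega
    have hsplit := Finset.sum_sdiff (f := g) hsub
    have hextra : ∑ i ∈ K \ K', g i ≤ 0 := by
      apply Finset.sum_nonpos
      intro i hi
      simp only [hK, hK', Finset.mem_sdiff, Finset.mem_filter, Finset.mem_univ, true_and,
        not_lt] at hi
      have hmi : m ≤ (i:ℕ) := by omega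
      exact le_of_lt ((hF i).mpr hmi)
    linarith
  -- positivity of A and B
  have hA0 : 0 ≤ A := by
    apply Finset.sum_nonneg
    intro i hi
    simp only [hP, Finset.mem_filter, Finset.mem_univ, true_and] at hi
    by_contra hneg
    push_neg at hneg
    have := (hF i).mp hneg
    omega
  have hB0 : 0 ≤ B := by
    apply Finset.sum_nonneg
    intro i hi
    simp only [hQ, Finset.mem_filter, Finset.mem_univ, true_and] at hi
    by_contra hneg
    push_neg at hneg
    have := (hF i).mp hneg
    omega
  -- A ≤ -N
  have hAN : A ≤ -N := by
    have hcompl : ∑ i ∈ Rᶜ, g i + N = 0 := by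
      rw [hN, Finset.sum_compl_add_sum]
      exact hgsum
    have hsub : P ⊆ Rᶜ := by
      intro i hi
      simp only [hP, Finset.mem_filter, Finset.mem_univ, true_and] at hi
      simp only [hR, Finset.mem_compl, Finset.mem_filter, Finset.mem_univ, true_and, not_le]
      omega
    have hle : A ≤ ∑ i ∈ Rᶜ, g i := by
      apply Finset.sum_le_sum_of_subset_of_nonneg hsub
      intro i hiRc _
      by_contra hneg
      push_neg at hneg
      have hmi := (hF i).mp hneg
      simp only [hR, Finset.mem_compl, Finset.mem_filter, Finset.mem_univ, true_and,
        not_le] at hiRc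
      omega
    linarith
  -- Cauchy-Schwarz on each block
  have hcardP : P.card = s := aux_card hsn
  have hcardQ : Q.card = k' - s := aux_card_Ico hk'n
  have hcardR : R.card = θ := by
    rw [hR, aux_card_ge (by omega : m ≤ n)]
    omega
  have hCSA : A^2 ≤ (s:ℝ) * x := by
    have := sq_sum_le_card_mul_sum_sq (s := P) (f := g)
    rwa [hcardP] at this
  have hCSB : B^2 ≤ ((k':ℝ) - s) * y := by
    have := sq_sum_le_card_mul_sum_sq (s := Q) (f := g)
    rw [hcardQ] at this
    rwa [Nat.cast_sub hsk'] at this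
  have hCSN : N^2 ≤ (θ:ℝ) * z := by
    have := sq_sum_le_card_mul_sum_sq (s := R) (f := g)
    rwa [hcardR] at this
  have hAz : A^2 ≤ (θ:ℝ) * z := by
    have hA2N2 : A^2 ≤ N^2 := by
      have h1 : A ≤ -N := hAN
      nlinarith [hA0, h1]
    linarith
  -- combine
  have hs0 : (0:ℝ) < s := by exact_mod_cast hs1
  have hθ0 : (0:ℝ) < θ := by exact_mod_cast hθ1
  have hθs : (0:ℝ) < (θ:ℝ) + s := by linarith
  set p : ℝ := (s:ℝ) * θ / ((θ:ℝ) + s) with hp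
  have hp0 : 0 < p := by positivity
  have hA2 : A^2 ≤ p * (x + z) := by
    rw [hp, div_mul_eq_mul_div, le_div_iff₀ hθs]
    have h1 : (θ:ℝ)*A^2 ≤ (θ:ℝ)*((s:ℝ)*x) := mul_le_mul_of_nonneg_left hCSA hθ0.le
    have h2 : (s:ℝ)*A^2 ≤ (s:ℝ)*((θ:ℝ)*z) := mul_le_mul_of_nonneg_left hAz hs0.le
    calc A^2 * ((θ:ℝ) + s) = (θ:ℝ)*A^2 + (s:ℝ)*A^2 := by ring
      _ ≤ (θ:ℝ)*((s:ℝ)*x) + (s:ℝ)*((θ:ℝ)*z) := add_le_add h1 h2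
      _ = (s:ℝ)*(θ:ℝ)*(x+z) := by ring
  have hq0 : (0:ℝ) ≤ (k':ℝ) - s := by
    have : (s:ℝ) ≤ k' := by exact_mod_cast hsk'
    linarith
  have hkey := aux_alg A B p ((k':ℝ) - s) x y z hp0 hq0 hx0 hy0 hz0 hA2 hCSB
  -- T ≥ x + y + z
  have hTxyz : x + y + z ≤ T := by
    rw [hT, hx, hy, hz]
    have hdisjPQR : Disjoint (P ∪ Q) R := by
      rw [Finset.disjoint_left]
      intro a ha haR
      simp only [hP, hQ, hR, Finset.mem_union, Finset.mem_filter, Finset.mem_univ,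
        true_and] at ha haR
      omega
    rw [← Finset.sum_union hdisjPQ, ← Finset.sum_union hdisjPQR]
    apply Finset.sum_le_sum_of_subset_of_nonneg (Finset.subset_univ _)
    intro i _ _
    exact sq_nonneg _
  have hT0 : 0 ≤ T := by linarith
  -- p + q ≤ c
  set c : ℝ := (k:ℝ) - (s:ℝ)^2 / ((θ:ℝ) + s) with hc
  have hpq_eq : p + ((k':ℝ) - s) = (k':ℝ) - (s:ℝ)^2 / ((θ:ℝ) + s) := by
    rw [hp]
    field_simp
    ring
  have hpqc : p + ((k':ℝ) - s) ≤ c := by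
    rw [hpq_eq, hc]
    have : (k':ℝ) ≤ k := by exact_mod_cast hk'k
    linarith
  have hc0 : 0 ≤ c := le_trans (by linarith) hpqc
  -- final sqrt step
  have hABsqrt : A + B ≤ Real.sqrt (T * c) := by
    rw [Real.le_sqrt (by linarith) (mul_nonneg hT0 hc0)]
    calc (A+B)^2 ≤ (p + ((k':ℝ) - s)) * (x+y+z) := hkey
      _ ≤ c * T := by
          apply mul_le_mul hpqc hTxyz (by linarith) hc0
      _ = T * c := mul_comm _ _
  -- rewrite goal
  have hsumK : ∑ i ∈ K, lam i = (∑ i ∈ K, g i) + (k:ℝ) * μ := by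
    have : ∀ i, lam i = g i + μ := by intro i; rw [hg]; ring
    rw [Finset.sum_congr rfl (fun i _ => this i), Finset.sum_add_distrib,
      Finset.sum_const, aux_card hkn, nsmul_eq_mul]
  have hμtr : (k:ℝ) * μ = ((k:ℝ) / n) * M.trace := by
    rw [hμ]; field_simp
  calc ∑ i ∈ K, lam i = (∑ i ∈ K, g i) + (k:ℝ) * μ := hsumK
    _ ≤ (A + B) + (k:ℝ) * μ := by linarith
    _ ≤ Real.sqrt (T * c) + (k:ℝ) * μ := by linarith
    _ = ((k:ℝ) / n) * M.trace + Real.sqrt (T * c) := by rw [hμtr]; ring
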